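/- With u(t) = (2/√(3ρ))·cos²(πt/(2ρ)) on |t| < ρ and 0 otherwise, and for any real α: ∫_{-∞}^{∞} (t³/3 − α)² u(t)² dt = α² + ((4π⁶ − 210π⁴ + 4410π² − 26775)/(252π⁶))·ρ⁶. -/

import Mathlib

set_option maxHeartbeats 1000000

open Real MeasureTheory

private lemma hp6 (a0 a1 a2 a3 a4 a5 a6 x : ℝ) :
    HasDerivAt (fun t : ℝ => a0 + a1*t + a2*t^2 + a3*t^3 + a4*t^4 + a5*t^5 + a6*t^6)
      (a1 + 2*a2*x + 3*a3*x^2 + 4*a4*x^3 + 5*a5*x^4 + 6*a6*x^5) x := by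
  have H := ((((((hasDerivAt_const x a0).add ((hasDerivAt_pow 1 x).const_mul a1)).add
    ((hasDerivAt_pow 2 x).const_mul a2)).add ((hasDerivAt_pow 3 x).const_mul a3)).add
    ((hasDerivAt_pow 4 x).const_mul a4)).add ((hasDerivAt_pow 5 x).const_mul a5)).add
    ((hasDerivAt_pow 6 x).const_mul a6)
  refine HasDerivAt.congr_deriv (HasDerivAt.congr_of_eventuallyEq H (Filter.Eventually.of_forall fun t => ?_)) ?_
  · simp only [Pi.add_apply]; push_cast; ring
  · push_cast; ring

private lemma hp7 (a0 a1 a2 a3 a4 a5 a6 a7 x : ℝ) :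
    HasDerivAt (fun t : ℝ => a0 + a1*t + a2*t^2 + a3*t^3 + a4*t^4 + a5*t^5 + a6*t^6 + a7*t^7)
      (a1 + 2*a2*x + 3*a3*x^2 + 4*a4*x^3 + 5*a5*x^4 + 6*a6*x^5 + 7*a7*x^6) x := by
  have H := (((((((hasDerivAt_const x a0).add ((hasDerivAt_pow 1 x).const_mul a1)).add
    ((hasDerivAt_pow 2 x).const_mul a2)).add ((hasDerivAt_pow 3 x).const_mul a3)).add
    ((hasDerivAt_pow 4 x).const_mul a4)).add ((hasDerivAt_pow 5 x).const_mul a5)).add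
    ((hasDerivAt_pow 6 x).const_mul a6)).add ((hasDerivAt_pow 7 x).const_mul a7)
  refine HasDerivAt.congr_deriv (HasDerivAt.congr_of_eventuallyEq H (Filter.Eventually.of_forall fun t => ?_)) ?_
  · simp only [Pi.add_apply]; push_cast; ring
  · push_cast; ring

private lemma hsin (c x : ℝ) :
    HasDerivAt (fun t : ℝ => Real.sin (c*t)) (Real.cos (c*x) * c) x := by
  exact ((Real.hasDerivAt_sin (c*x)).comp x ((hasDerivAt_id x).const_mul c)).congr_deriv (by ring)

private lemma hcos (c x : ℝ) :
    HasDerivAt (fun t : ℝ => Real.cos (c*t)) (-Real.sin (c*x) * c) x := by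
  exact ((Real.hasDerivAt_cos (c*x)).comp x ((hasDerivAt_id x).const_mul c)).congr_deriv (by ring)

noncomputable def Fa (w ρ α : ℝ) : ℝ → ℝ := fun t =>
  ((0 + (α^2/(2*ρ))*t + 0*t^2 + 0*t^3 + (-(α/(12*ρ)))*t^4 + 0*t^5 + 0*t^6 + (1/(126*ρ))*t^7)
    + ((2/(3*ρ*w)*(α^2 - 80/w^6)) + (2/(3*ρ*w)*(4*α/w^2))*t + (2/(3*ρ*w)*(40/w^4))*t^2 + (2/(3*ρ*w)*(-(2*α/3)))*t^3 + (2/(3*ρ*w)*(-(10/(3*w^2))))*t^4 + 0*t^5 + (2/(3*ρ*w)*(1/9))*t^6) * Real.sin (w*t)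
    + ((2/(3*ρ*w^2)*(4*α/w^2)) + (2/(3*ρ*w^2)*(80/w^4))*t + (2/(3*ρ*w^2)*(-(2*α)))*t^2 + (2/(3*ρ*w^2)*(-(40/(3*w^2))))*t^3 + 0*t^4 + (2/(3*ρ*w^2)*(2/3))*t^5 + 0*t^6) * Real.cos (w*t)
    + ((1/(12*ρ*w)*(α^2 - 5/(4*w^6))) + (1/(12*ρ*w)*(α/w^2))*t + (1/(12*ρ*w)*(5/(2*w^4)))*t^2 + (1/(12*ρ*w)*(-(2*α/3)))*t^3 + (1/(12*ρ*w)*(-(5/(6*w^2))))*t^4 + 0*t^5 + (1/(12*ρ*w)*(1/9))*t^6) * Real.sin (2*w*t)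
    + ((1/(24*ρ*w^2)*(α/w^2)) + (1/(24*ρ*w^2)*(5/w^4))*t + (1/(24*ρ*w^2)*(-(2*α)))*t^2 + (1/(24*ρ*w^2)*(-(10/(3*w^2))))*t^3 + 0*t^4 + (1/(24*ρ*w^2)*(2/3))*t^5 + 0*t^6) * Real.cos (2*w*t))

theorem stmt_16 (ρ α : ℝ) (hρ : 0 < ρ) :
    ∫ t : ℝ,
      (t^3/3 - α)^2 *
        (if |t| < ρ then (2/Real.sqrt (3*ρ)) * Real.cos (π*t/(2*ρ))^2 else 0)^2
      = α^2 + ((4*π^6 - 210*π^4 + 4410*π^2 - 26775)/(252*π^6)) * ρ^6 := by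
  have hρ0 : ρ ≠ 0 := ne_of_gt hρ
  have hπ0 : π ≠ 0 := Real.pi_ne_zero
  have h3ρ : (0:ℝ) ≤ 3*ρ := by linarith
  have hsq : (2/Real.sqrt (3*ρ))^2 = 4/(3*ρ) := by
    rw [div_pow, Real.sq_sqrt h3ρ]; norm_num
  set w : ℝ := π/ρ with hw
  set g : ℝ → ℝ := fun t => (t^3/3 - α)^2 * ((4/(3*ρ)) * Real.cos (π*t/(2*ρ))^4) with hgdef
  have e0 : (fun t : ℝ => (t^3/3 - α)^2 *
      (if |t| < ρ then (2/Real.sqrt (3*ρ)) * Real.cos (π*t/(2*ρ))^2 else 0)^2)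
      = (Set.Ioo (-ρ) ρ).indicator g := by
    funext t
    rw [Set.indicator_apply]
    by_cases ht : |t| < ρ
    · rw [if_pos ht, if_pos (Set.mem_Ioo.mpr (abs_lt.mp ht)), hgdef]
      simp only
      rw [mul_pow, hsq]; ring
    · rw [if_neg ht, if_neg (fun hmem => ht (abs_lt.mpr (Set.mem_Ioo.mp hmem)))]
      ring
  rw [e0, MeasureTheory.integral_indicator measurableSet_Ioo,
    ← MeasureTheory.integral_Ioc_eq_integral_Ioo,
    ← intervalIntegral.integral_of_le (by linarith : -ρ ≤ ρ)]
  have hint : IntervalIntegrable g volume (-ρ) ρ := by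
    apply Continuous.intervalIntegrable
    rw [hgdef]; fun_prop
  have key : ∀ x ∈ Set.uIcc (-ρ) ρ, HasDerivAt (Fa w ρ α) (g x) x := by
    intro x _
    have H := ((((hp7 0 (α^2/(2*ρ)) 0 0 (-(α/(12*ρ))) 0 0 (1/(126*ρ)) x).add ((hp6 (2/(3*ρ*w)*(α^2 - 80/w^6)) (2/(3*ρ*w)*(4*α/w^2)) (2/(3*ρ*w)*(40/w^4)) (2/(3*ρ*w)*(-(2*α/3))) (2/(3*ρ*w)*(-(10/(3*w^2)))) 0 (2/(3*ρ*w)*(1/9)) x).mul (hsin w x))).add ((hp6 (2/(3*ρ*w^2)*(4*α/w^2)) (2/(3*ρ*w^2)*(80/w^4)) (2/(3*ρ*w^2)*(-(2*α))) (2/(3*ρ*w^2)*(-(40/(3*w^2)))) 0 (2/(3*ρ*w^2)*(2/3)) 0 x).mul (hcos w x))).add ((hp6 (1/(12*ρ*w)*(α^2 - 5/(4*w^6))) (1/(12*ρ*w)*(α/w^2)) (1/(12*ρ*w)*(5/(2*w^4))) (1/(12*ρ*w)*(-(2*α/3))) (1/(12*ρ*w)*(-(5/(6*w^2)))) 0 (1/(12*ρ*w)*(1/9))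 x).mul (hsin (2*w) x))).add ((hp6 (1/(24*ρ*w^2)*(α/w^2)) (1/(24*ρ*w^2)*(5/w^4)) (1/(24*ρ*w^2)*(-(2*α))) (1/(24*ρ*w^2)*(-(10/(3*w^2)))) 0 (1/(24*ρ*w^2)*(2/3)) 0 x).mul (hcos (2*w) x))
    have e1 : w*x = 2*(π*x/(2*ρ)) := by rw [hw]; field_simp
    have e2 : 2*w*x = 2*(w*x) := by ring
    unfold Fa
    convert H using 1
    show (x^3/3 - α)^2 * ((4/(3*ρ)) * Real.cos (π*x/(2*ρ))^4) = _
    rw [e2, Real.cos_two_mul, Real.sin_two_mul, e1, Real.cos_two_mul, Real.sin_two_mul]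
    have hpyth := Real.sin_sq_add_cos_sq (π*x/(2*ρ))
    have hw0 : w ≠ 0 := div_ne_zero hπ0 hρ0
    field_simp
    ring
    all_goals rfl
  rw [intervalIntegral.integral_eq_sub_of_hasDerivAt key hint]
  unfold Fa
  have p1 : w*ρ = π := by rw [hw]; field_simp
  have p2 : 2*w*ρ = 2*π := by rw [hw]; field_simp
  have p3 : w*(-ρ) = -π := by rw [hw]; field_simp
  have p4 : 2*w*(-ρ) = -(2*π) := by rw [hw]; field_simp
  rw [p1, p2, p3, p4, Real.sin_neg, Real.cos_neg, Real.sin_neg, Real.cos_neg,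
    Real.sin_pi, Real.cos_pi, Real.sin_two_pi, Real.cos_two_pi]
  rw [hw]
  field_simp
  ring
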